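/- Let f : Q → ℝ be relatively μ-strongly convex with respect to ψ (μ > 0), let x* minimize f over Q, let x_k ∈ Q, let g_k be a subgradient of f at x_k, and let g̃_k ∈ E* satisfy ‖g̃_k − g_k‖_* ≤ A for some A ≥ 0. Let γ_k > 0 with 1/γ_k ≥ μ/2, and let x_{k+1} minimize x ↦ ⟨g̃_k, x⟩ + (1/γ_k) V_ψ(x, x_k) over Q. Then f(x_k) − f(x*) ≤ (γ_k/2) ‖g̃_k‖_*² + (1/γ_k − μ/2) V_ψ(x*, x_k) − (1/γ_k) V_ψ(x*, x_{k+1}) + A²/μ. -/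
import Mathlib


open Finset Real

noncomputable def breg {E : Type*} [NormedAddCommGroup E] [NormedSpace ℝ E]
    (ψ : E → ℝ) (ψ' : E → E →L[ℝ] ℝ) (x y : E) : ℝ :=
  ψ x - ψ y - ψ' y (x - y)

theorem inexact_step_inequality
    {E : Type*} [NormedAddCommGroup E] [NormedSpace ℝ E] [FiniteDimensional ℝ E]
    (Q : Set E) (hQcomp : IsCompact Q) (hQconv : Convex ℝ Q)
    (ψ : E → ℝ) (ψ' : E → E →L[ℝ] ℝ)
    (hψdiff : ∀ x ∈ Q, HasFDerivWithinAt ψ (ψ' x) Q x)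
    (hψsc : ∀ x ∈ Q, ∀ y ∈ Q, ψ y + ψ' y (x - y) + 1 / 2 * ‖x - y‖ ^ 2 ≤ ψ x)
    (f : E → ℝ) (μ : ℝ) (hμ : 0 < μ)
    (hf : ∀ x ∈ Q, ∀ gx : E →L[ℝ] ℝ, (∀ y ∈ Q, f x + gx (y - x) ≤ f y) →
      ∀ y ∈ Q, f x + gx (y - x) + μ * breg ψ ψ' y x ≤ f y)
    (xs : E) (hxsQ : xs ∈ Q) (hxs : ∀ y ∈ Q, f xs ≤ f y)
    (xk : E) (hxk : xk ∈ Q)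
    (gk : E →L[ℝ] ℝ) (hgk : ∀ y ∈ Q, f xk + gk (y - xk) ≤ f y)
    (gtk : E →L[ℝ] ℝ) (A : ℝ) (hA : 0 ≤ A) (hAg : ‖gtk - gk‖ ≤ A)
    (γk : ℝ) (hγk : 0 < γk) (hγμ : μ / 2 ≤ 1 / γk)
    (xk1 : E) (hxk1 : xk1 ∈ Q)
    (hmin : ∀ y ∈ Q, gtk xk1 + 1 / γk * breg ψ ψ' xk1 xk
      ≤ gtk y + 1 / γk * breg ψ ψ' y xk) :
    f xk - f xs ≤ γk / 2 * ‖gtk‖ ^ 2 + (1 / γk - μ / 2) * breg ψ ψ' xs xk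
      - 1 / γk * breg ψ ψ' xs xk1 + A ^ 2 / μ := by
  -- step 2: first-order optimality condition for the prox step (before abbreviations)
  have hFOC : 0 ≤ gtk (xs - xk1)
      + 1 / γk * ((ψ' xk1) (xs - xk1) - (ψ' xk) (xs - xk1)) := by
    set F : E → ℝ := fun x => gtk x + 1 / γk * (ψ x - ψ xk - ((ψ' xk) x - (ψ' xk) xk))
      with hF
    have hminOn : IsMinOn F Q xk1 := by
      intro y hy
      have := hmin y hy
      simp only [breg, map_sub] at this
      simpa [F, Set.mem_setOf_eq] using this
    have hd : HasFDerivWithinAt F (gtk + (1 / γk) • (ψ' xk1 - ψ' xk)) Q xk1 := by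
      have h2 : HasFDerivWithinAt (fun x => ψ x - ψ xk - ((ψ' xk) x - (ψ' xk) xk))
          (ψ' xk1 - ψ' xk) Q xk1 :=
        ((hψdiff xk1 hxk1).sub_const (ψ xk)).sub
          (((ψ' xk).hasFDerivAt.hasFDerivWithinAt).sub_const ((ψ' xk) xk))
      exact (gtk.hasFDerivAt.hasFDerivWithinAt).add (h2.const_mul (1 / γk))
    have hcone : xs - xk1 ∈ posTangentConeAt Q xk1 :=
      sub_mem_posTangentConeAt_of_segment_subset (hQconv.segment_subset hxk1 hxsQ)
    have := hminOn.localize.hasFDerivWithinAt_nonneg hd hcone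
    simpa [ContinuousLinearMap.add_apply, ContinuousLinearMap.smul_apply,
      ContinuousLinearMap.sub_apply, smul_eq_mul] using this
  -- notation
  set B0 := breg ψ ψ' xs xk with hB0
  set B1 := breg ψ ψ' xs xk1 with hB1
  set B2 := breg ψ ψ' xk1 xk with hB2
  -- step 1: relative strong convexity at xk applied to xs
  have h1 : f xk - f xs ≤ gk (xk - xs) - μ * B0 := by
    have := hf xk hxk gk hgk xs hxsQ
    have hsub : gk (xs - xk) = -gk (xk - xs) := by
      rw [← map_neg]; congr 1; abel
    rw [hsub] at this
    linarith
  -- three-point identity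
  have h3pt : (ψ' xk1) (xs - xk1) - (ψ' xk) (xs - xk1) = B0 - B1 - B2 := by
    have hv : xs - xk1 = (xs - xk) - (xk1 - xk) := by abel
    rw [hB0, hB1, hB2]
    simp only [breg, hv, map_sub]
    ring
  -- strong convexity lower bounds on Bregman divergences
  have hs2 : 1 / 2 * ‖xk1 - xk‖ ^ 2 ≤ B2 := by
    have := hψsc xk1 hxk1 xk hxk
    rw [hB2]; simp only [breg]; linarith
  have hs0 : 1 / 2 * ‖xs - xk‖ ^ 2 ≤ B0 := by
    have := hψsc xs hxsQ xk hxk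
    rw [hB0]; simp only [breg]; linarith
  have h0γ : (0:ℝ) < 1 / γk := by positivity
  -- Cauchy-Schwarz / Young steps
  have hcs1 : gtk (xk - xk1) ≤ ‖gtk‖ * ‖xk - xk1‖ :=
    le_trans (le_abs_self _) (gtk.le_opNorm _)
  have hyoung1 : gtk (xk - xk1) ≤ γk / 2 * ‖gtk‖ ^ 2 + 1 / γk * B2 := by
    have hn : ‖xk - xk1‖ = ‖xk1 - xk‖ := norm_sub_rev _ _
    have key : γk / 2 * ‖gtk‖ ^ 2 + 1 / (2 * γk) * ‖xk1 - xk‖ ^ 2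
        - ‖gtk‖ * ‖xk1 - xk‖ = (γk * ‖gtk‖ - ‖xk1 - xk‖) ^ 2 / (2 * γk) := by
      field_simp; ring
    have h2 : ‖gtk‖ * ‖xk1 - xk‖ ≤ γk / 2 * ‖gtk‖ ^ 2 + 1 / (2 * γk) * ‖xk1 - xk‖ ^ 2 := by
      linarith [key, div_nonneg (sq_nonneg (γk * ‖gtk‖ - ‖xk1 - xk‖)) (by positivity : (0:ℝ) ≤ 2 * γk)]
    have h3 : 1 / (2 * γk) * ‖xk1 - xk‖ ^ 2 ≤ 1 / γk * B2 := by
      have hm := mul_le_mul_of_nonneg_left hs2 h0γ.le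
      have he : 1 / (2 * γk) * ‖xk1 - xk‖ ^ 2 = 1 / γk * (1 / 2 * ‖xk1 - xk‖ ^ 2) := by
        ring
      linarith
    rw [hn] at hcs1; linarith
  have hcs2 : (gk - gtk) (xk - xs) ≤ A * ‖xk - xs‖ := by
    have h1' : (gk - gtk) (xk - xs) ≤ ‖gk - gtk‖ * ‖xk - xs‖ :=
      le_trans (le_abs_self _) ((gk - gtk).le_opNorm _)
    have h2 : ‖gk - gtk‖ ≤ A := by rwa [norm_sub_rev]
    nlinarith [norm_nonneg (xk - xs)]
  have hyoung2 : (gk - gtk) (xk - xs) ≤ A ^ 2 / μ + μ / 2 * B0 := by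
    have hn : ‖xk - xs‖ = ‖xs - xk‖ := norm_sub_rev _ _
    have key : A ^ 2 / μ + μ / 4 * ‖xs - xk‖ ^ 2 - A * ‖xs - xk‖
        = (2 * A - μ * ‖xs - xk‖) ^ 2 / (4 * μ) := by
      field_simp; ring
    have h2 : A * ‖xs - xk‖ ≤ A ^ 2 / μ + μ / 4 * ‖xs - xk‖ ^ 2 := by
      linarith [key, div_nonneg (sq_nonneg (2 * A - μ * ‖xs - xk‖)) (by positivity : (0:ℝ) ≤ 4 * μ)]
    have hm := mul_le_mul_of_nonneg_left hs0 (by positivity : (0:ℝ) ≤ μ / 2)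
    have he : μ / 4 * ‖xs - xk‖ ^ 2 = μ / 2 * (1 / 2 * ‖xs - xk‖ ^ 2) := by ring
    rw [hn] at hcs2; linarith
  -- decompose gk (xk - xs)
  have hdec : gk (xk - xs) = gtk (xk - xk1) + (-(gtk (xs - xk1))) + (gk - gtk) (xk - xs) := by
    simp only [ContinuousLinearMap.sub_apply, map_sub]
    ring
  -- FOC rewritten, distributed
  have hFOC' : -(gtk (xs - xk1)) ≤ 1 / γk * B0 - 1 / γk * B1 - 1 / γk * B2 := by
    rw [h3pt] at hFOC
    have : 1 / γk * (B0 - B1 - B2) = 1 / γk * B0 - 1 / γk * B1 - 1 / γk * B2 := by ring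
    linarith
  -- conclude
  have hexp : (1 / γk - μ / 2) * B0 = 1 / γk * B0 - μ / 2 * B0 := by ring
  rw [hdec] at h1
  linarith
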